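/- Let P and P₀ be skew-Hermitian endomorphisms of a finite-dimensional Hermitian space with the same spectrum, λ an eigenvalue, and δ > 0 less than the distance from λ to the rest of the spectrum. Then the spectral projectors Π and Π₀ onto the λ-eigenspaces satisfy |Π − Π₀| ≤ δ⁻¹ |P − P₀| (in operator norm). -/

import Mathlib

open scoped InnerProductSpace ComplexConjugate

lemma spe_key {n : ℕ} (H : EuclideanSpace ℂ (Fin n) →L[ℂ] EuclideanSpace ℂ (Fin n))
    (hH : IsSelfAdjoint H) (μ : ℂ) (δ : ℝ) (hδ : 0 ≤ δ)
    (hgap : ∀ z ∈ spectrum ℂ H, z ≠ μ → δ ≤ ‖z - μ‖)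
    (K : Submodule ℂ (EuclideanSpace ℂ (Fin n)))
    (hKmem : ∀ x, x ∈ K ↔ H x = μ • x)
    (v : EuclideanSpace ℂ (Fin n)) :
    δ * ‖v - (Submodule.orthogonalProjectionOnto K v : EuclideanSpace ℂ (Fin n))‖ ≤ ‖H v - μ • v‖ := by
  classical
  have hn : Module.finrank ℂ (EuclideanSpace ℂ (Fin n)) = n := finrank_euclideanSpace_fin
  have hsym : (H : EuclideanSpace ℂ (Fin n) →ₗ[ℂ] EuclideanSpace ℂ (Fin n)).IsSymmetric := hH.isSymmetric
  set b := hsym.eigenvectorBasis hn with hb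
  set ν := hsym.eigenvalues hn with hν
  have happ : ∀ i, H (b i) = (ν i : ℂ) • b i := fun i => hsym.apply_eigenvectorBasis hn i
  -- eigenvalues are in the spectrum
  have hsp : ∀ i, (ν i : ℂ) ∈ spectrum ℂ H := by
    intro i
    rw [spectrum.mem_iff]
    intro hunit
    obtain ⟨u, hu⟩ := hunit
    have hzero : (algebraMap ℂ (EuclideanSpace ℂ (Fin n) →L[ℂ] EuclideanSpace ℂ (Fin n)) ((ν i : ℂ)) - H) (b i) = 0 := by
      simp [Algebra.algebraMap_eq_smul_one, happ i]
    have hbz : b i = 0 := by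
      calc b i = (u.inv * u.val) (b i) := by rw [u.inv_val]; rfl
        _ = u.inv (u.val (b i)) := rfl
        _ = u.inv 0 := by rw [hu, hzero]
        _ = 0 := map_zero _
    have : ‖b i‖ = 1 := b.orthonormal.1 i
    rw [hbz] at this
    simp at this
  -- coefficients
  set c : Fin n → ℂ := fun i => ⟪b i, v⟫_ℂ with hc
  set d : Fin n → ℂ := fun i => if (ν i : ℂ) = μ then 0 else c i with hd
  set e : Fin n → ℂ := fun i => if (ν i : ℂ) = μ then c i else 0 with he
  set u : EuclideanSpace ℂ (Fin n) := ∑ i, e i • b i with hu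
  set w : EuclideanSpace ℂ (Fin n) := ∑ i, d i • b i with hw
  have hvsum : v = ∑ i, c i • b i := (b.sum_repr' v).symm
  have huw : v = u + w := by
    rw [hu, hw, ← Finset.sum_add_distrib, hvsum]
    refine Finset.sum_congr rfl fun i _ => ?_
    by_cases h : (ν i : ℂ) = μ <;> simp [hd, he, h]
  have hbker : ∀ i, (ν i : ℂ) = μ → b i ∈ K := by
    intro i h
    rw [hKmem]
    rw [happ i, h]
  have huK : u ∈ K := by
    refine Submodule.sum_mem _ fun i _ => ?_
    by_cases h : (ν i : ℂ) = μ
    · exact Submodule.smul_mem _ _ (hbker i h)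
    · simp [he, h]
  have hbortho : ∀ i, (ν i : ℂ) ≠ μ → ∀ z ∈ K, ⟪b i, z⟫_ℂ = 0 := by
    intro i h z hz
    have hHz : H z = μ • z := (hKmem z).mp hz
    have h1 : ⟪H (b i), z⟫_ℂ = ⟪b i, H z⟫_ℂ := hsym (b i) z
    rw [happ i, hHz, inner_smul_left, inner_smul_right, Complex.conj_ofReal] at h1
    have h2 : ((ν i : ℂ) - μ) * ⟪b i, z⟫_ℂ = 0 := by ring_nf; linear_combination h1
    rcases mul_eq_zero.mp h2 with h3 | h3
    · exact absurd (sub_eq_zero.mp h3) h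
    · exact h3
  have hwK : w ∈ Kᗮ := by
    rw [Submodule.mem_orthogonal]
    intro z hz
    rw [hw, inner_sum]
    refine Finset.sum_eq_zero fun i _ => ?_
    rw [inner_smul_right]
    by_cases h : (ν i : ℂ) = μ
    · simp [hd, h]
    · have := hbortho i h z hz
      have : ⟪z, b i⟫_ℂ = 0 := by
        rw [← inner_conj_symm, this, map_zero]
      rw [this, mul_zero]
  have hproj : (Submodule.orthogonalProjectionOnto K v : EuclideanSpace ℂ (Fin n)) = u :=
    by have := Submodule.eq_starProjection_of_mem_orthogonal' huK hwK huw; exact this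
  have hdiff : v - (Submodule.orthogonalProjectionOnto K v : EuclideanSpace ℂ (Fin n)) = w := by
    rw [hproj, huw]; abel
  -- norm of w
  have hnw : (‖w‖ : ℝ) ^ 2 = ∑ i, Complex.normSq (d i) := by
    have h1 : ⟪w, w⟫_ℂ = ∑ i, conj (d i) * d i := b.orthonormal.inner_sum d d Finset.univ
    have h2 : ⟪w, w⟫_ℂ = ((‖w‖ : ℝ) : ℂ) ^ 2 := by
      rw [inner_self_eq_norm_sq_to_K]
      norm_cast
    rw [h2] at h1
    have h3 : (((‖w‖ : ℝ) ^ 2 : ℝ) : ℂ) = ((∑ i, Complex.normSq (d i) : ℝ) : ℂ) := by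
      push_cast
      rw [h1]
      simp [Complex.normSq_eq_conj_mul_self]
    exact_mod_cast h3
  -- H v - μ v as a sum
  set g : Fin n → ℂ := fun i => c i * ((ν i : ℂ) - μ) with hg
  have hHv : H v - μ • v = ∑ i, g i • b i := by
    conv_lhs => rw [hvsum]
    rw [map_sum, Finset.smul_sum, ← Finset.sum_sub_distrib]
    refine Finset.sum_congr rfl fun i _ => ?_
    rw [map_smul, happ i, smul_smul, smul_smul, ← sub_smul]
    congr 1
    simp [hg]
    ring
  have hng : ‖H v - μ • v‖ ^ 2 = ∑ i, Complex.normSq (g i) := by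
    have h1 : ⟪H v - μ • v, H v - μ • v⟫_ℂ = ∑ i, conj (g i) * g i := by
      rw [hHv]; exact b.orthonormal.inner_sum g g Finset.univ
    have h2 : ⟪H v - μ • v, H v - μ • v⟫_ℂ = ((‖H v - μ • v‖ : ℝ) : ℂ) ^ 2 := by
      rw [inner_self_eq_norm_sq_to_K]
      norm_cast
    rw [h2] at h1
    have h3 : (((‖H v - μ • v‖ : ℝ) ^ 2 : ℝ) : ℂ) = ((∑ i, Complex.normSq (g i) : ℝ) : ℂ) := by
      push_cast
      rw [h1]
      simp [Complex.normSq_eq_conj_mul_self]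
    exact_mod_cast h3
  -- compare term by term
  have hterm : ∀ i, δ ^ 2 * Complex.normSq (d i) ≤ Complex.normSq (g i) := by
    intro i
    by_cases h : (ν i : ℂ) = μ
    · simp [hd, h, Complex.normSq_nonneg]
    · have hge : δ ≤ ‖(ν i : ℂ) - μ‖ := hgap _ (hsp i) h
      have hdi : d i = c i := by simp [hd, h]
      have hgi : g i = c i * ((ν i : ℂ) - μ) := rfl
      rw [hdi, hgi, Complex.normSq_mul]
      have h1 : Complex.normSq ((ν i : ℂ) - μ) = ‖(ν i : ℂ) - μ‖ ^ 2 :=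
        (Complex.sq_norm _).symm
      rw [h1]
      have h2 : δ ^ 2 ≤ ‖(ν i : ℂ) - μ‖ ^ 2 :=
        pow_le_pow_left₀ hδ hge 2
      have := mul_le_mul_of_nonneg_left h2 (Complex.normSq_nonneg (c i))
      linarith
  have hsq : (δ * ‖w‖) ^ 2 ≤ ‖H v - μ • v‖ ^ 2 := by
    rw [mul_pow, hnw, hng, Finset.mul_sum]
    exact Finset.sum_le_sum fun i _ => hterm i
  rw [hdiff]
  have h0 : (0 : ℝ) ≤ δ * ‖w‖ := mul_nonneg hδ (norm_nonneg _)
  exact (pow_le_pow_iff_left₀ h0 (norm_nonneg _) two_ne_zero).mp hsq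

lemma spe_perp {n : ℕ} (P P₀ : EuclideanSpace ℂ (Fin n) →L[ℂ] EuclideanSpace ℂ (Fin n))
    (hP : ContinuousLinearMap.adjoint P = -P)
    (lam : ℂ) (δ : ℝ) (hδ : 0 ≤ δ)
    (hgap : ∀ μ ∈ spectrum ℂ P, μ ≠ lam → δ ≤ ‖μ - lam‖)
    (v : EuclideanSpace ℂ (Fin n))
    (hv : v ∈ LinearMap.ker ((P₀ - lam • (1 : EuclideanSpace ℂ (Fin n) →L[ℂ] EuclideanSpace ℂ (Fin n))) : EuclideanSpace ℂ (Fin n) →ₗ[ℂ] EuclideanSpace ℂ (Fin n))) :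
    δ * ‖v - (Submodule.orthogonalProjectionOnto
        (LinearMap.ker ((P - lam • (1 : EuclideanSpace ℂ (Fin n) →L[ℂ] EuclideanSpace ℂ (Fin n))) : EuclideanSpace ℂ (Fin n) →ₗ[ℂ] EuclideanSpace ℂ (Fin n))) v :
        EuclideanSpace ℂ (Fin n))‖ ≤ ‖P - P₀‖ * ‖v‖ := by
  set H : EuclideanSpace ℂ (Fin n) →L[ℂ] EuclideanSpace ℂ (Fin n) := Complex.I • P with hH
  set μ : ℂ := Complex.I * lam with hμ
  have hHsa : IsSelfAdjoint H := by
    rw [IsSelfAdjoint, ContinuousLinearMap.star_eq_adjoint, hH]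
    rw [LinearIsometryEquiv.map_smulₛₗ]
    rw [hP]
    simp [Complex.conj_I]
  have hKmem : ∀ x, x ∈ LinearMap.ker
      ((P - lam • (1 : EuclideanSpace ℂ (Fin n) →L[ℂ] EuclideanSpace ℂ (Fin n))) : EuclideanSpace ℂ (Fin n) →ₗ[ℂ] EuclideanSpace ℂ (Fin n))
      ↔ H x = μ • x := by
    intro x
    rw [LinearMap.mem_ker]
    have h1 : (P - lam • (1 : EuclideanSpace ℂ (Fin n) →L[ℂ] EuclideanSpace ℂ (Fin n))) x
        = P x - lam • x := by
      simp [ContinuousLinearMap.sub_apply]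
    rw [show ((P : EuclideanSpace ℂ (Fin n) →ₗ[ℂ] EuclideanSpace ℂ (Fin n)) - lam • ((1 : EuclideanSpace ℂ (Fin n) →L[ℂ] EuclideanSpace ℂ (Fin n)) : EuclideanSpace ℂ (Fin n) →ₗ[ℂ] EuclideanSpace ℂ (Fin n))) x = P x - lam • x from h1]
    constructor
    · intro h
      have h2 : P x = lam • x := by rwa [sub_eq_zero] at h
      rw [hH, hμ, ContinuousLinearMap.smul_apply, h2, smul_smul]
    · intro h
      rw [hH, hμ, ContinuousLinearMap.smul_apply, mul_smul] at h
      have h2 : P x = lam • x := smul_right_injective _ Complex.I_ne_zero h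
      rw [h2, sub_self]
  have hHgap : ∀ z ∈ spectrum ℂ H, z ≠ μ → δ ≤ ‖z - μ‖ := by
    intro z hz hzμ
    have hu : H = (Units.mk0 Complex.I Complex.I_ne_zero) • P := by
      rw [hH, Units.smul_def, Units.val_mk0]
    rw [hu, spectrum.unit_smul_eq_smul] at hz
    obtain ⟨x, hx, hxz⟩ := hz
    have hxz' : Complex.I * x = z := by
      simpa [Units.smul_def] using hxz
    have hxne : x ≠ lam := by
      intro h
      apply hzμ
      rw [← hxz', h, hμ]
    have : ‖z - μ‖ = ‖x - lam‖ := by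
      rw [← hxz', hμ, ← mul_sub, norm_mul, Complex.norm_I, one_mul]
    rw [this]
    exact hgap x hx hxne
  have hPv : P₀ v = lam • v := by
    have := LinearMap.mem_ker.mp hv
    rw [LinearMap.sub_apply] at this
    simpa [sub_eq_zero] using this
  have hnorm : ‖H v - μ • v‖ = ‖(P - P₀) v‖ := by
    have h1 : H v - μ • v = Complex.I • ((P - P₀) v) := by
      rw [hH, hμ, ContinuousLinearMap.sub_apply, smul_sub, ContinuousLinearMap.smul_apply,
        mul_smul, hPv]
    rw [h1, norm_smul, Complex.norm_I, one_mul]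
  have key := spe_key H hHsa μ δ hδ hHgap _ hKmem v
  rw [hnorm] at key
  exact key.trans ((P - P₀).le_opNorm v)

set_option maxHeartbeats 1000000 in
theorem spe_main_aux {n : ℕ}
    (P P₀ : EuclideanSpace ℂ (Fin n) →L[ℂ] EuclideanSpace ℂ (Fin n))
    (hP : ContinuousLinearMap.adjoint P = -P)
    (hP₀ : ContinuousLinearMap.adjoint P₀ = -P₀)
    (hspec : spectrum ℂ P = spectrum ℂ P₀)
    (lam : ℂ) (hlam : lam ∈ spectrum ℂ P)
    (δ : ℝ) (hδ : 0 < δ)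
    (hgap : ∀ μ ∈ spectrum ℂ P, μ ≠ lam → δ < ‖μ - lam‖) :
    (fun (K K₀ : Submodule ℂ (EuclideanSpace ℂ (Fin n))) =>
      ‖(K.subtypeL.comp (Submodule.orthogonalProjectionOnto K)
          - K₀.subtypeL.comp (Submodule.orthogonalProjectionOnto K₀) :
          EuclideanSpace ℂ (Fin n) →L[ℂ] EuclideanSpace ℂ (Fin n))‖
        ≤ δ⁻¹ * ‖P - P₀‖)
    (LinearMap.ker ((P - lam • (1 : EuclideanSpace ℂ (Fin n) →L[ℂ] EuclideanSpace ℂ (Fin n))) : EuclideanSpace ℂ (Fin n) →ₗ[ℂ] EuclideanSpace ℂ (Fin n)))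
    (LinearMap.ker ((P₀ - lam • (1 : EuclideanSpace ℂ (Fin n) →L[ℂ] EuclideanSpace ℂ (Fin n))) : EuclideanSpace ℂ (Fin n) →ₗ[ℂ] EuclideanSpace ℂ (Fin n))) := by
  set K := LinearMap.ker ((P - lam • (1 : EuclideanSpace ℂ (Fin n) →L[ℂ] EuclideanSpace ℂ (Fin n))) : EuclideanSpace ℂ (Fin n) →ₗ[ℂ] EuclideanSpace ℂ (Fin n))
  set K₀ := LinearMap.ker ((P₀ - lam • (1 : EuclideanSpace ℂ (Fin n) →L[ℂ] EuclideanSpace ℂ (Fin n))) : EuclideanSpace ℂ (Fin n) →ₗ[ℂ] EuclideanSpace ℂ (Fin n))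
  show ‖(K.subtypeL.comp (Submodule.orthogonalProjectionOnto K) - K₀.subtypeL.comp (Submodule.orthogonalProjectionOnto K₀) :
      EuclideanSpace ℂ (Fin n) →L[ℂ] EuclideanSpace ℂ (Fin n))‖ ≤ δ⁻¹ * ‖P - P₀‖
  set R := ‖P - P₀‖ with hR
  have hR0 : 0 ≤ R := norm_nonneg _
  have hgap' : ∀ μ ∈ spectrum ℂ P, μ ≠ lam → δ ≤ ‖μ - lam‖ :=
    fun μ hμ hne => (hgap μ hμ hne).le
  have hgap₀ : ∀ μ ∈ spectrum ℂ P₀, μ ≠ lam → δ ≤ ‖μ - lam‖ := by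
    rw [← hspec]; exact hgap'
  have hbound1 : ∀ v ∈ K₀, δ * ‖v - (Submodule.orthogonalProjectionOnto K v : EuclideanSpace ℂ (Fin n))‖
      ≤ R * ‖v‖ := fun v hv => spe_perp P P₀ hP lam δ hδ.le hgap' v hv
  have hbound2 : ∀ v ∈ K, δ * ‖v - (Submodule.orthogonalProjectionOnto K₀ v : EuclideanSpace ℂ (Fin n))‖
      ≤ R * ‖v‖ := by
    intro v hv
    have := spe_perp P₀ P hP₀ lam δ hδ.le hgap₀ v hv
    rwa [show ‖P₀ - P‖ = ‖P - P₀‖ from norm_sub_rev _ _] at this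
  refine ContinuousLinearMap.opNorm_le_bound _ (mul_nonneg (inv_nonneg.mpr hδ.le) hR0) fun x => ?_
  set p : EuclideanSpace ℂ (Fin n) := (Submodule.orthogonalProjectionOnto K₀ x : EuclideanSpace ℂ (Fin n))
    with hp
  set q : EuclideanSpace ℂ (Fin n) := x - p with hq
  have hpK₀ : p ∈ K₀ := SetLike.coe_mem _
  have hqperp : q ∈ K₀ᗮ := Submodule.sub_starProjection_mem_orthogonal x
  set a : EuclideanSpace ℂ (Fin n) := (Submodule.orthogonalProjectionOnto K q : EuclideanSpace ℂ (Fin n))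
    with ha
  have haK : a ∈ K := SetLike.coe_mem _
  set bb : EuclideanSpace ℂ (Fin n) :=
    p - (Submodule.orthogonalProjectionOnto K p : EuclideanSpace ℂ (Fin n)) with hbb
  have hbbperp : bb ∈ Kᗮ := Submodule.sub_starProjection_mem_orthogonal p
  have hxpq : x = p + q := by rw [hq]; abel
  have hD : (K.subtypeL.comp (Submodule.orthogonalProjectionOnto K)
      - K₀.subtypeL.comp (Submodule.orthogonalProjectionOnto K₀)) x = a - bb := by
    have h1 : (Submodule.orthogonalProjectionOnto K x : EuclideanSpace ℂ (Fin n))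
        = (Submodule.orthogonalProjectionOnto K p : EuclideanSpace ℂ (Fin n)) + a := by
      conv_lhs => rw [hxpq]
      rw [map_add, Submodule.coe_add]
    rw [ContinuousLinearMap.sub_apply, ContinuousLinearMap.comp_apply,
      ContinuousLinearMap.comp_apply, Submodule.subtypeL_apply, Submodule.subtypeL_apply,
      h1, ← hp, hbb]
    abel
  have hip : ⟪a, bb⟫_ℂ = 0 := Submodule.inner_right_of_mem_orthogonal haK hbbperp
  have hDnorm : ‖a - bb‖ ^ 2 = ‖a‖ ^ 2 + ‖bb‖ ^ 2 := by
    rw [@norm_sub_sq ℂ, hip]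
    simp
  have hipx : ⟪p, q⟫_ℂ = 0 := Submodule.inner_right_of_mem_orthogonal hpK₀ hqperp
  have hx2 : ‖x‖ ^ 2 = ‖p‖ ^ 2 + ‖q‖ ^ 2 := by
    conv_lhs => rw [hxpq]
    rw [@norm_add_sq ℂ, hipx]
    simp
  -- bound on bb
  have hB : δ * ‖bb‖ ≤ R * ‖p‖ := hbound1 p hpK₀
  -- bound on a
  have hA : δ * ‖a‖ ≤ R * ‖q‖ := by
    rcases eq_or_ne a 0 with h | h
    · rw [h, norm_zero, mul_zero]
      exact mul_nonneg hR0 (norm_nonneg _)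
    · have e0 : ⟪a, q - a⟫_ℂ = 0 :=
        Submodule.inner_right_of_mem_orthogonal haK
          (Submodule.sub_starProjection_mem_orthogonal q)
      have e1 : ⟪a, q⟫_ℂ = ((‖a‖ ^ 2 : ℝ) : ℂ) := by
        have : ⟪a, a + (q - a)⟫_ℂ = ((‖a‖ ^ 2 : ℝ) : ℂ) := by
          rw [inner_add_right, e0, add_zero, inner_self_eq_norm_sq_to_K]
          norm_cast
        rwa [add_sub_cancel] at this
      have e2 : ⟪(Submodule.orthogonalProjectionOnto K₀ a : EuclideanSpace ℂ (Fin n)), q⟫_ℂ = 0 :=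
        Submodule.inner_right_of_mem_orthogonal (SetLike.coe_mem _) hqperp
      have e3 : ⟪a - (Submodule.orthogonalProjectionOnto K₀ a : EuclideanSpace ℂ (Fin n)), q⟫_ℂ
          = ((‖a‖ ^ 2 : ℝ) : ℂ) := by
        rw [inner_sub_left, e2, sub_zero, e1]
      have e4 : ‖a‖ ^ 2 ≤ ‖a - (Submodule.orthogonalProjectionOnto K₀ a : EuclideanSpace ℂ (Fin n))‖ * ‖q‖ := by
        have := norm_inner_le_norm (𝕜 := ℂ)
          (a - (Submodule.orthogonalProjectionOnto K₀ a : EuclideanSpace ℂ (Fin n))) q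
        rw [e3] at this
        rwa [Complex.norm_real, Real.norm_of_nonneg (sq_nonneg _)] at this
      have e5 : δ * (‖a‖ ^ 2) ≤ (R * ‖a‖) * ‖q‖ := by
        calc δ * (‖a‖ ^ 2)
            ≤ δ * (‖a - (Submodule.orthogonalProjectionOnto K₀ a : EuclideanSpace ℂ (Fin n))‖ * ‖q‖) :=
              mul_le_mul_of_nonneg_left e4 hδ.le
          _ = (δ * ‖a - (Submodule.orthogonalProjectionOnto K₀ a : EuclideanSpace ℂ (Fin n))‖) * ‖q‖ := by ring
          _ ≤ (R * ‖a‖) * ‖q‖ :=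
              mul_le_mul_of_nonneg_right (hbound2 a haK) (norm_nonneg _)
      have hna : 0 < ‖a‖ := norm_pos_iff.mpr h
      have : δ * ‖a‖ * ‖a‖ ≤ R * ‖q‖ * ‖a‖ := by nlinarith
      exact le_of_mul_le_mul_right this hna
  -- combine
  have hsq : (δ * ‖a - bb‖) ^ 2 ≤ (R * ‖x‖) ^ 2 := by
    have h1 : (δ * ‖a - bb‖) ^ 2 = (δ * ‖a‖) ^ 2 + (δ * ‖bb‖) ^ 2 := by
      rw [mul_pow, mul_pow, mul_pow, hDnorm]; ring
    have h2 : (R * ‖x‖) ^ 2 = (R * ‖q‖) ^ 2 + (R * ‖p‖) ^ 2 := by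
      rw [mul_pow, mul_pow, mul_pow, hx2]; ring
    rw [h1, h2]
    have h3 : (δ * ‖a‖) ^ 2 ≤ (R * ‖q‖) ^ 2 :=
      pow_le_pow_left₀ (mul_nonneg hδ.le (norm_nonneg _)) hA 2
    have h4 : (δ * ‖bb‖) ^ 2 ≤ (R * ‖p‖) ^ 2 :=
      pow_le_pow_left₀ (mul_nonneg hδ.le (norm_nonneg _)) hB 2
    linarith
  have hfin : δ * ‖a - bb‖ ≤ R * ‖x‖ :=
    (pow_le_pow_iff_left₀ (mul_nonneg hδ.le (norm_nonneg _))
      (mul_nonneg hR0 (norm_nonneg _)) two_ne_zero).mp hsq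
  rw [hD]
  calc ‖a - bb‖ = δ⁻¹ * (δ * ‖a - bb‖) := by
        field_simp
    _ ≤ δ⁻¹ * (R * ‖x‖) := mul_le_mul_of_nonneg_left hfin (inv_nonneg.mpr hδ.le)
    _ = δ⁻¹ * R * ‖x‖ := by ring



/-- Let `P` and `P₀` be skew-Hermitian endomorphisms of a finite-dimensional Hermitian
space with the same spectrum, `λ` an eigenvalue, and `δ > 0` less than the distance
from `λ` to the rest of the spectrum.  Then the orthogonal (spectral) projectors `Π`
and `Π₀` onto the `λ`-eigenspaces satisfy `‖Π − Π₀‖ ≤ δ⁻¹ ‖P − P₀‖`. -/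
theorem spectral_projector_estimate {n : ℕ}
    (P P₀ : EuclideanSpace ℂ (Fin n) →L[ℂ] EuclideanSpace ℂ (Fin n))
    (hP : ContinuousLinearMap.adjoint P = -P)
    (hP₀ : ContinuousLinearMap.adjoint P₀ = -P₀)
    (hspec : spectrum ℂ P = spectrum ℂ P₀)
    (lam : ℂ) (hlam : lam ∈ spectrum ℂ P)
    (δ : ℝ) (hδ : 0 < δ)
    (hgap : ∀ μ ∈ spectrum ℂ P, μ ≠ lam → δ < ‖μ - lam‖) :
    (fun (K K₀ : Submodule ℂ (EuclideanSpace ℂ (Fin n))) =>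
      ‖(K.subtypeL.comp (Submodule.orthogonalProjectionOnto K)
          - K₀.subtypeL.comp (Submodule.orthogonalProjectionOnto K₀) :
          EuclideanSpace ℂ (Fin n) →L[ℂ] EuclideanSpace ℂ (Fin n))‖
        ≤ δ⁻¹ * ‖P - P₀‖)
    (LinearMap.ker ((P - lam • (1 : EuclideanSpace ℂ (Fin n) →L[ℂ] EuclideanSpace ℂ (Fin n))) : EuclideanSpace ℂ (Fin n) →ₗ[ℂ] EuclideanSpace ℂ (Fin n)))
    (LinearMap.ker ((P₀ - lam • (1 : EuclideanSpace ℂ (Fin n) →L[ℂ] EuclideanSpace ℂ (Fin n))) : EuclideanSpace ℂ (Fin n) →ₗ[ℂ] EuclideanSpace ℂ (Fin n))) :=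
  spe_main_aux P P₀ hP hP₀ hspec lam hlam δ hδ hgap
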